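/- The set V = ∪_{i≥0} V_i (with V_0 = −S(L), V_{i+1} = ∪_{v∈V_i} π(Ψ(v))) satisfies the stability property ∪_{v ∈ V} π(Ψ(v)) = V, and has minimal element min V = −μ_κ, the opposite of the largest slope of the Newton polygon of L. -/

import Mathlib

open Polynomial Finset

noncomputable def PL {K : Type*} [Field K] (ℓ n : ℕ) (a : ℕ → Polynomial K) : Finset (ℚ × ℚ) :=
  (Finset.range (n + 1)).biUnion fun i =>
    (a i).support.image fun j : ℕ => ((ℓ : ℚ) ^ i, (j : ℚ))

noncomputable def PsiSet {K : Type*} [Field K] (ℓ n : ℕ) (a : ℕ → Polynomial K) (v : ℚ) :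
    Finset ℚ :=
  (PL ℓ n a).image fun p => v * p.1 + p.2

noncomputable def psi {K : Type*} [Field K] (ℓ n : ℕ) (a : ℕ → Polynomial K) (v : ℚ) : ℚ :=
  WithTop.untopD 0 ((PsiSet ℓ n a v).min)

noncomputable def piF {K : Type*} [Field K] (ℓ n : ℕ) (a : ℕ → Polynomial K) (q : ℚ) : ℚ :=
  WithBot.unbotD 0 (((PL ℓ n a).image fun p => (q - p.2) / p.1).max)

def slopeSet {K : Type*} [Field K] (ℓ n : ℕ) (a : ℕ → Polynomial K) : Set ℚ :=
  {μ | ∃ b : ℚ,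
    (∃ p ∈ PL ℓ n a, ∃ q ∈ PL ℓ n a, p ≠ q ∧ p.2 - μ * p.1 = b ∧ q.2 - μ * q.1 = b) ∧
    ∀ p ∈ PL ℓ n a, b ≤ p.2 - μ * p.1}

noncomputable def scaleEmb (ℓ : ℕ) (hℓ : 2 ≤ ℓ) (i : ℕ) : ℚ ↪o ℚ :=
  (OrderIso.mulLeft₀ ((ℓ : ℚ) ^ i)
    (pow_pos (by exact_mod_cast Nat.lt_of_lt_of_le Nat.zero_lt_two hℓ) i)).toOrderEmbedding

noncomputable def mahlerOp {K : Type*} [Field K] (ℓ : ℕ) (hℓ : 2 ≤ ℓ) (n : ℕ)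
    (a : ℕ → Polynomial K) (f : HahnSeries ℚ K) : HahnSeries ℚ K :=
  ∑ i ∈ Finset.range (n + 1),
    (HahnSeries.ofPowerSeries ℚ K (a i : PowerSeries K)) *
      HahnSeries.embDomain (scaleEmb ℓ hℓ i) f

noncomputable def VSeq {K : Type*} [Field K] (ℓ n : ℕ) (a : ℕ → Polynomial K) : ℕ → Set ℚ
  | 0 => Neg.neg '' slopeSet ℓ n a
  | i + 1 => ⋃ v ∈ VSeq ℓ n a i, ((PsiSet ℓ n a v).image (piF ℓ n a) : Set ℚ)

noncomputable def VSet {K : Type*} [Field K] (ℓ n : ℕ) (a : ℕ → Polynomial K) : Set ℚ :=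
  ⋃ i, VSeq ℓ n a i

section aux

variable {K : Type*} [Field K] (ℓ n : ℕ) (a : ℕ → Polynomial K)

lemma mem_PL_iff (p : ℚ × ℚ) :
    p ∈ PL ℓ n a ↔ ∃ i ≤ n, ∃ j ∈ (a i).support, ((ℓ : ℚ) ^ i, (j : ℚ)) = p := by
  simp [PL, Finset.mem_biUnion, Finset.mem_image, Nat.lt_succ_iff]

lemma PL_fst_pos (hℓ : 2 ≤ ℓ) : ∀ p ∈ PL ℓ n a, (0 : ℚ) < p.1 := by
  intro p hp
  rw [mem_PL_iff] at hp
  obtain ⟨i, -, j, -, rfl⟩ := hp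
  have : (0 : ℚ) < (ℓ : ℚ) := by exact_mod_cast Nat.lt_of_lt_of_le Nat.zero_lt_two hℓ
  exact pow_pos this i

lemma PL_nonempty (h0 : a 0 ≠ 0) : (PL ℓ n a).Nonempty := by
  obtain ⟨j, hj⟩ := Polynomial.support_nonempty.mpr h0
  exact ⟨((ℓ : ℚ) ^ 0, (j : ℚ)), (mem_PL_iff ℓ n a _).mpr ⟨0, Nat.zero_le n, j, hj, rfl⟩⟩

lemma piF_eq (hP : (PL ℓ n a).Nonempty) (q : ℚ) :
    piF ℓ n a q = ((PL ℓ n a).image fun p => (q - p.2) / p.1).max' (hP.image _) := by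
  rw [piF, ← Finset.coe_max' (hP.image _), WithBot.unbotD_coe]

lemma le_piF (hP : (PL ℓ n a).Nonempty) {p : ℚ × ℚ} (hp : p ∈ PL ℓ n a) (q : ℚ) :
    (q - p.2) / p.1 ≤ piF ℓ n a q := by
  have hmem : (q - p.2) / p.1 ∈ (PL ℓ n a).image fun r => (q - r.2) / r.1 :=
    Finset.mem_image.mpr ⟨p, hp, rfl⟩
  rw [piF_eq ℓ n a hP]
  exact Finset.le_max' _ _ hmem

lemma psiSet_nonempty (h0 : a 0 ≠ 0) (v : ℚ) : (PsiSet ℓ n a v).Nonempty :=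
  (PL_nonempty ℓ n a h0).image _

/-- Step lower bound: any element of π(Ψ(v)) is at least v. -/
lemma le_piF_of_mem_psiSet (hℓ : 2 ≤ ℓ) (h0 : a 0 ≠ 0) {v q : ℚ}
    (hq : q ∈ PsiSet ℓ n a v) : v ≤ piF ℓ n a q := by
  rw [PsiSet, Finset.mem_image] at hq
  obtain ⟨p, hp, rfl⟩ := hq
  have hpos := PL_fst_pos ℓ n a hℓ p hp
  have : (v * p.1 + p.2 - p.2) / p.1 = v := by
    field_simp
    ring
  calc v = (v * p.1 + p.2 - p.2) / p.1 := this.symm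
    _ ≤ _ := le_piF ℓ n a (PL_nonempty ℓ n a h0) hp _

/-- Fixed point: v ∈ π(Ψ(v)). -/
lemma self_mem_image_piF (hℓ : 2 ≤ ℓ) (h0 : a 0 ≠ 0) (v : ℚ) :
    v ∈ (PsiSet ℓ n a v).image (piF ℓ n a) := by
  have hP := PL_nonempty ℓ n a h0
  have hΨ := psiSet_nonempty ℓ n a h0 v
  set m := (PsiSet ℓ n a v).min' hΨ with hm
  have hmmem : m ∈ PsiSet ℓ n a v := Finset.min'_mem _ _
  have key : piF ℓ n a m = v := by
    apply le_antisymm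
    · rw [piF_eq ℓ n a hP]
      apply Finset.max'_le
      intro x hx
      rw [Finset.mem_image] at hx
      obtain ⟨p, hp, rfl⟩ := hx
      have hpos := PL_fst_pos ℓ n a hℓ p hp
      rw [div_le_iff₀ hpos]
      have hmem2 : v * p.1 + p.2 ∈ PsiSet ℓ n a v := Finset.mem_image_of_mem _ hp
      have hle2 : m ≤ v * p.1 + p.2 := Finset.min'_le (PsiSet ℓ n a v) _ hmem2
      linarith
    · exact le_piF_of_mem_psiSet ℓ n a hℓ h0 hmmem
  exact Finset.mem_image.mpr ⟨m, hmmem, key⟩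

lemma slopeSet_finite : (slopeSet ℓ n a).Finite := by
  apply Set.Finite.subset
    (Finset.finite_toSet (((PL ℓ n a) ×ˢ (PL ℓ n a)).image
      fun pq => (pq.2.2 - pq.1.2) / (pq.2.1 - pq.1.1)))
  rintro μ ⟨b, ⟨p, hp, q, hq, hpq, h1, h2⟩, -⟩
  have hne : p.1 ≠ q.1 := by
    intro h
    apply hpq
    have h2' : p.2 = q.2 := by rw [h] at h1; linarith
    exact Prod.ext h h2'
  have hμ : μ = (q.2 - p.2) / (q.1 - p.1) := by
    rw [eq_div_iff (sub_ne_zero.mpr (Ne.symm hne))]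
    linarith
  simp only [Finset.coe_image, Set.mem_image, Finset.mem_coe, Finset.mem_product]
  exact ⟨(p, q), ⟨hp, hq⟩, hμ.symm⟩

lemma slopeSet_nonempty (hℓ : 2 ≤ ℓ) (h0 : a 0 ≠ 0) (hn : a n ≠ 0) (hn1 : 1 ≤ n) :
    (slopeSet ℓ n a).Nonempty := by
  have hP := PL_nonempty ℓ n a h0
  have hℓQ : (1 : ℚ) < (ℓ : ℚ) := by exact_mod_cast Nat.lt_of_lt_of_le Nat.one_lt_two hℓ
  -- rightmost x-coordinate
  set X := (PL ℓ n a).image Prod.fst with hX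
  set Xmax := X.max' (hP.image _) with hXmax
  -- point of a n gives Xmax > 1
  obtain ⟨jn, hjn⟩ := Polynomial.support_nonempty.mpr hn
  have hpn : ((ℓ : ℚ) ^ n, (jn : ℚ)) ∈ PL ℓ n a :=
    (mem_PL_iff ℓ n a _).mpr ⟨n, le_refl n, jn, hjn, rfl⟩
  have hXmax_big : (1 : ℚ) < Xmax := by
    have hmx : ((ℓ : ℚ) ^ n, (jn : ℚ)).1 ∈ X := Finset.mem_image_of_mem Prod.fst hpn
    have h1 : (ℓ : ℚ) ^ n ≤ Xmax := Finset.le_max' X _ hmx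
    have : (1 : ℚ) < (ℓ : ℚ) ^ n := one_lt_pow₀ hℓQ (by omega)
    linarith
  -- point of a 0 has x-coordinate 1
  obtain ⟨j0, hj0⟩ := Polynomial.support_nonempty.mpr h0
  have hp0 : ((1 : ℚ), (j0 : ℚ)) ∈ PL ℓ n a := by
    have := (mem_PL_iff ℓ n a ((ℓ : ℚ) ^ 0, (j0 : ℚ))).mpr ⟨0, Nat.zero_le n, j0, hj0, rfl⟩
    simpa using this
  -- point R: rightmost with minimal second coordinate
  set F := (PL ℓ n a).filter (fun p => p.1 = Xmax) with hF
  have hFne : F.Nonempty := by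
    have : Xmax ∈ X := Finset.max'_mem _ _
    rw [hX, Finset.mem_image] at this
    obtain ⟨p, hp, hpeq⟩ := this
    exact ⟨p, Finset.mem_filter.mpr ⟨hp, hpeq⟩⟩
  set S2 := F.image Prod.snd with hS2
  have hS2ne : S2.Nonempty := hFne.image _
  obtain ⟨R, hRF, hR2⟩ := Finset.mem_image.mp (Finset.min'_mem S2 hS2ne)
  have hRPL : R ∈ PL ℓ n a := (Finset.mem_filter.mp hRF).1
  have hR1 : R.1 = Xmax := (Finset.mem_filter.mp hRF).2
  -- points strictly left
  set Q := (PL ℓ n a).filter (fun p => p.1 < Xmax) with hQ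
  have hQne : Q.Nonempty := ⟨_, Finset.mem_filter.mpr ⟨hp0, by simpa using hXmax_big⟩⟩
  set D := Q.image (fun p => (R.2 - p.2) / (R.1 - p.1)) with hD
  set μ := D.max' (hQne.image _) with hμ
  obtain ⟨ps, hpsQ, hps⟩ := Finset.mem_image.mp (Finset.max'_mem D (hQne.image _))
  have hpsPL : ps ∈ PL ℓ n a := (Finset.mem_filter.mp hpsQ).1
  have hps1 : ps.1 < Xmax := (Finset.mem_filter.mp hpsQ).2
  have hgap : (0 : ℚ) < R.1 - ps.1 := by rw [hR1]; linarith
  have hps_eq : ps.2 - μ * ps.1 = R.2 - μ * R.1 := by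
    have hμeq : μ = (R.2 - ps.2) / (R.1 - ps.1) := hps.symm
    have hkey : R.2 - ps.2 = μ * (R.1 - ps.1) := by
      rw [hμeq, div_mul_cancel₀ _ (ne_of_gt hgap)]
    linarith
  refine ⟨μ, R.2 - μ * R.1, ⟨R, hRPL, ps, hpsPL, ?_, rfl, hps_eq⟩, ?_⟩
  · intro h; rw [← h] at hps1; rw [hR1] at hps1; exact lt_irrefl _ hps1
  · intro p hp
    have hple : p.1 ≤ Xmax := Finset.le_max' _ _ (Finset.mem_image_of_mem _ hp)
    rcases lt_or_eq_of_le hple with hlt | heq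
    · have hpQ : p ∈ Q := Finset.mem_filter.mpr ⟨hp, hlt⟩
      have hle : (R.2 - p.2) / (R.1 - p.1) ≤ μ :=
        Finset.le_max' D _ (Finset.mem_image_of_mem _ hpQ)
      have hgap' : (0 : ℚ) < R.1 - p.1 := by rw [hR1]; linarith
      rw [div_le_iff₀ hgap'] at hle
      nlinarith [hle]
    · have hpF : p ∈ F := Finset.mem_filter.mpr ⟨hp, heq⟩
      have : R.2 ≤ p.2 := by
        rw [hR2]
        exact Finset.min'_le _ _ (Finset.mem_image_of_mem _ hpF)
      rw [heq, ← hR1]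
      linarith

end aux

theorem stmt12 {K : Type*} [Field K] (ℓ n : ℕ) (hℓ : 2 ≤ ℓ) (a : ℕ → Polynomial K)
    (h0 : a 0 ≠ 0) (hn : a n ≠ 0) (hn1 : 1 ≤ n) :
    (⋃ v ∈ VSet ℓ n a, ((PsiSet ℓ n a v).image (piF ℓ n a) : Set ℚ)) = VSet ℓ n a ∧
    ∃ μ : ℚ, IsGreatest (slopeSet ℓ n a) μ ∧ IsLeast (VSet ℓ n a) (-μ) := by
  have hP := PL_nonempty ℓ n a h0
  constructor
  · apply Set.Subset.antisymm
    · intro x hx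
      rw [Set.mem_iUnion₂] at hx
      obtain ⟨v, hv, hx⟩ := hx
      rw [VSet, Set.mem_iUnion] at hv
      obtain ⟨i, hvi⟩ := hv
      rw [VSet, Set.mem_iUnion]
      refine ⟨i + 1, ?_⟩
      show x ∈ ⋃ v ∈ VSeq ℓ n a i, ((PsiSet ℓ n a v).image (piF ℓ n a) : Set ℚ)
      exact Set.mem_biUnion hvi hx
    · intro x hx
      rw [Set.mem_iUnion₂]
      exact ⟨x, hx, Finset.mem_coe.mpr (self_mem_image_piF ℓ n a hℓ h0 x)⟩
  · have hfin := slopeSet_finite ℓ n a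
    have hne := slopeSet_nonempty ℓ n a hℓ h0 hn hn1
    have hfne : hfin.toFinset.Nonempty := by
      rwa [← Set.Finite.toFinset_nonempty hfin] at hne
    set μ := hfin.toFinset.max' hfne with hμdef
    have hmem : μ ∈ slopeSet ℓ n a := by
      have := Finset.max'_mem hfin.toFinset hfne
      rwa [Set.Finite.mem_toFinset] at this
    have hub : ∀ ν ∈ slopeSet ℓ n a, ν ≤ μ := fun ν hν =>
      Finset.le_max' _ _ (hfin.mem_toFinset.mpr hν)
    refine ⟨μ, ⟨hmem, hub⟩, ?_, ?_⟩
    · rw [VSet, Set.mem_iUnion]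
      exact ⟨0, ⟨μ, hmem, rfl⟩⟩
    · have key : ∀ i, ∀ v ∈ VSeq ℓ n a i, -μ ≤ v := by
        intro i
        induction i with
        | zero =>
          rintro v ⟨ν, hν, rfl⟩
          exact neg_le_neg (hub ν hν)
        | succ i ih =>
          intro v hvi
          have hvi' : v ∈ ⋃ w ∈ VSeq ℓ n a i,
              ((PsiSet ℓ n a w).image (piF ℓ n a) : Set ℚ) := hvi
          rw [Set.mem_iUnion₂] at hvi'
          obtain ⟨w, hw, hv⟩ := hvi'
          obtain ⟨q, hq, rfl⟩ := Finset.mem_image.mp (Finset.mem_coe.mp hv)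
          exact le_trans (ih w hw) (le_piF_of_mem_psiSet ℓ n a hℓ h0 hq)
      intro v hv
      rw [VSet, Set.mem_iUnion] at hv
      obtain ⟨i, hvi⟩ := hv
      exact key i v hvi
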